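/- If a differentiable function V : [t0, t1) → ℝ≥0 satisfies V(t0) = 0 and V'(t) ≤ 2λ V(t) + d̄ √(2 V(t)) for all t ∈ [t0, t1), with λ, d̄ > 0, then V(t) ≤ ( (d̄ √2)/(2λ) (exp(λ (t - t0)) - 1) )² for all t ∈ [t0, t1). -/

import Mathlib

theorem stmt_0 (t0 t1 lam dbar : ℝ) (hlam : 0 < lam) (hdbar : 0 < dbar)
    (V V' : ℝ → ℝ)
    (hnn : ∀ t ∈ Set.Ico t0 t1, 0 ≤ V t)
    (hder : ∀ t ∈ Set.Ico t0 t1, HasDerivAt V (V' t) t)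
    (h0 : V t0 = 0)
    (hbound : ∀ t ∈ Set.Ico t0 t1,
      V' t ≤ 2 * lam * V t + dbar * Real.sqrt (2 * V t)) :
    ∀ t ∈ Set.Ico t0 t1,
      V t ≤ ((dbar * Real.sqrt 2) / (2 * lam) * (Real.exp (lam * (t - t0)) - 1)) ^ 2 := by
  intro t ht
  obtain ⟨ht0, ht1⟩ := ht
  set E := Real.exp (lam * (t - t0)) with hE
  have hE1 : 1 ≤ E := by
    rw [hE]
    calc (1:ℝ) = Real.exp 0 := (Real.exp_zero).symm
    _ ≤ E := Real.exp_le_exp.2 (mul_nonneg hlam.le (sub_nonneg.2 ht0))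
  set c := dbar * Real.sqrt 2 / (2 * lam) with hc
  have hcpos : 0 < c := by positivity
  have key : ∀ δ : ℝ, 0 < δ → V t ≤ (δ * E + c * (E - 1)) ^ 2 := by
    intro δ hδ
    set f := fun s => Real.sqrt (V s + δ ^ 2) with hf
    set f' := fun s => V' s / (2 * Real.sqrt (V s + δ ^ 2)) with hf'
    have hsub : Set.Icc t0 t ⊆ Set.Ico t0 t1 := fun s hs => ⟨hs.1, lt_of_le_of_lt hs.2 ht1⟩
    have hposV : ∀ s ∈ Set.Icc t0 t, 0 < V s + δ ^ 2 := fun s hs => by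
      have := hnn s (hsub hs); positivity
    have hfpos : ∀ s ∈ Set.Icc t0 t, 0 < f s := fun s hs => Real.sqrt_pos.2 (hposV s hs)
    have hfsq : ∀ s ∈ Set.Icc t0 t, f s ^ 2 = V s + δ ^ 2 := fun s hs =>
      Real.sq_sqrt (hposV s hs).le
    have hfd : ∀ s ∈ Set.Icc t0 t, HasDerivAt f (f' s) s := by
      intro s hs
      have h1 : HasDerivAt (fun u => V u + δ ^ 2) (V' s) s :=
        (hder s (hsub hs)).add_const _
      have h2 := (Real.hasDerivAt_sqrt (ne_of_gt (hposV s hs))).comp s h1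
      have e : f' s = 1 / (2 * Real.sqrt (V s + δ ^ 2)) * V' s := by
        rw [hf']; ring
      rw [e]; exact h2
    have hcont : ContinuousOn f (Set.Icc t0 t) := fun s hs =>
      (hfd s hs).continuousAt.continuousWithinAt
    have hbd : ∀ s ∈ Set.Ico t0 t, f' s ≤ lam * f s + dbar * Real.sqrt 2 / 2 := by
      intro s hs
      have hs' : s ∈ Set.Icc t0 t := ⟨hs.1, hs.2.le⟩
      have hfp := hfpos s hs'
      have hVle : Real.sqrt (V s) ≤ f s :=
        Real.sqrt_le_sqrt (by nlinarith [sq_nonneg δ])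
      have hV : V s ≤ f s ^ 2 := by rw [hfsq s hs']; nlinarith [sq_nonneg δ]
      have hsqrt2 : Real.sqrt (2 * V s) = Real.sqrt 2 * Real.sqrt (V s) :=
        Real.sqrt_mul (by norm_num) _
      have hb := hbound s (hsub hs')
      have hnum : V' s ≤ 2 * lam * f s ^ 2 + dbar * Real.sqrt 2 * f s := by
        rw [hsqrt2, ← mul_assoc] at hb
        have a1 : 2 * lam * V s ≤ 2 * lam * f s ^ 2 := by nlinarith
        have a2 : dbar * Real.sqrt 2 * Real.sqrt (V s) ≤ dbar * Real.sqrt 2 * f s :=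
          mul_le_mul_of_nonneg_left hVle (by positivity)
        linarith
      rw [hf']
      have h2f : 0 < 2 * Real.sqrt (V s + δ ^ 2) := by positivity
      rw [div_le_iff₀ h2f]
      have : Real.sqrt (V s + δ ^ 2) = f s := rfl
      rw [this]
      nlinarith
    have hgron := le_gronwallBound_of_liminf_deriv_right_le hcont
      (fun x hx r hr =>
        ((hfd x ⟨hx.1, hx.2.le⟩).hasDerivWithinAt.liminf_right_slope_le hr))
      (show f t0 ≤ δ by
        simp only [hf, h0, zero_add, Real.sqrt_sq hδ.le]; exact le_refl δ)
      hbd t ⟨ht0, le_refl t⟩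
    rw [gronwallBound_of_K_ne_0 (ne_of_gt hlam)] at hgron
    replace hgron : f t ≤ δ * Real.exp (lam * (t - t0)) +
        dbar * Real.sqrt 2 / 2 / lam * (Real.exp (lam * (t - t0)) - 1) := hgron
    have heq : δ * Real.exp (lam * (t - t0)) +
        dbar * Real.sqrt 2 / 2 / lam * (Real.exp (lam * (t - t0)) - 1)
        = δ * E + c * (E - 1) := by
      rw [hc, hE]; ring
    rw [heq] at hgron
    have hft : V t + δ ^ 2 = f t ^ 2 := (hfsq t ⟨ht0, le_refl t⟩).symm
    have hrhs : 0 ≤ δ * E + c * (E - 1) := by nlinarith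
    have hf0 := hfpos t ⟨ht0, le_refl t⟩
    nlinarith [mul_self_le_mul_self hf0.le hgron, sq_nonneg δ]
  -- take δ → 0⁺
  have htend : Filter.Tendsto (fun δ : ℝ => (δ * E + c * (E - 1)) ^ 2)
      (nhdsWithin 0 (Set.Ioi 0)) (nhds ((c * (E - 1)) ^ 2)) := by
    have : Filter.Tendsto (fun δ : ℝ => (δ * E + c * (E - 1)) ^ 2)
        (nhds 0) (nhds ((0 * E + c * (E - 1)) ^ 2)) := by
      apply Filter.Tendsto.pow
      exact ((continuous_id.mul continuous_const).add continuous_const).tendsto 0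
    simpa using this.mono_left nhdsWithin_le_nhds
  have := ge_of_tendsto htend (Filter.eventually_of_mem self_mem_nhdsWithin
    (fun δ hδ => key δ hδ))
  calc V t ≤ (c * (E - 1)) ^ 2 := this
  _ = ((dbar * Real.sqrt 2) / (2 * lam) * (Real.exp (lam * (t - t0)) - 1)) ^ 2 := by
      rw [hc, hE]
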